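/- Let Θ be a finite-dimensional inner product space, θ₀ ∈ Θ, ε > 0, c > 0, and let L : Θ → ℝ≥0 be continuously differentiable with L(θ₀) > ε. Suppose the gradient flow θ : ℝ≥0 → Θ of L satisfies, for all t in an interval [0,T) on which L(θ_t) ≥ ε, the inequality ‖∇L(θ_t)‖ ≥ (L(θ_t) − ε)/(r_t + c), where r_t = ∫₀ᵗ ‖∂_s θ_s‖ ds. Then for all t ∈ [0,T), r_t + c ≤ c · (L(θ₀) − ε)/(L(θ_t) − ε). -/

import Mathlib

open Set MeasureTheory intervalIntegral

/-- Radius–loss bound: along a gradient flow of `L`, if on `[0,T)` the loss stays above `ε`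
and `‖∇L(θ t)‖ ≥ (L(θ t) - ε)/(r t + c)` where `r t = ∫₀ᵗ ‖∂ₛθ‖`, then
`(L(θ t) - ε) (r t + c) ≤ c (L(θ 0) - ε)` (i.e. `r t + c ≤ c (L(θ 0)-ε)/(L(θ t)-ε)`). -/
theorem stmt17 {Θ : Type*} [NormedAddCommGroup Θ] [InnerProductSpace ℝ Θ]
    [FiniteDimensional ℝ Θ]
    (L : Θ → ℝ) (hL : ContDiff ℝ 1 L) (hLnonneg : ∀ θ, 0 ≤ L θ)
    (ε c : ℝ) (hε : 0 < ε) (hc : 0 < c)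
    (θ : ℝ → Θ) (T : ℝ) (hT : 0 < T)
    (hflow : ∀ t : ℝ, 0 ≤ t → HasDerivAt θ (-(gradient L (θ t))) t)
    (hinit : ε < L (θ 0))
    (hge : ∀ t : ℝ, 0 ≤ t → t < T → ε ≤ L (θ t))
    (hKL : ∀ t : ℝ, 0 ≤ t → t < T →
      (L (θ t) - ε) / ((∫ s in (0:ℝ)..t, ‖deriv θ s‖) + c) ≤ ‖gradient L (θ t)‖) :
    ∀ t : ℝ, 0 ≤ t → t < T →
      (L (θ t) - ε) * ((∫ s in (0:ℝ)..t, ‖deriv θ s‖) + c) ≤ c * (L (θ 0) - ε) := by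
  have hLd : Differentiable ℝ L := hL.differentiable one_ne_zero
  have hgc : Continuous (fun x => gradient L (x)) := by
    have h1 : Continuous (fderiv ℝ L) := hL.continuous_fderiv one_ne_zero
    exact (InnerProductSpace.toDual ℝ Θ).symm.continuous.comp h1
  set G : ℝ → Θ := fun s => gradient L (θ s) with hG
  have hθc : ContinuousOn θ (Set.Ici 0) := fun s hs =>
    ((hflow s hs).continuousAt).continuousWithinAt
  have hGc : ContinuousOn G (Set.Ici 0) := hgc.comp_continuousOn hθc
  have hde : ∀ s : ℝ, 0 ≤ s → deriv θ s = -(G s) := fun s hs => (hflow s hs).deriv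
  have hnormeq : ∀ s ∈ Set.Ici (0:ℝ), ‖G s‖ = ‖deriv θ s‖ := by
    intro s hs; rw [hde s hs, norm_neg]
  have hφc : ContinuousOn (fun s => ‖deriv θ s‖) (Set.Ici 0) :=
    ContinuousOn.congr hGc.norm (fun s hs => (hnormeq s hs).symm)
  intro t ht htT
  set r : ℝ → ℝ := fun u => ∫ s in (0:ℝ)..u, ‖deriv θ s‖ with hr
  have hint : ∀ u : ℝ, 0 ≤ u → IntervalIntegrable (fun s => ‖deriv θ s‖) volume 0 u := by
    intro u hu
    exact (hφc.mono (by rw [Set.uIcc_of_le hu]; exact Set.Icc_subset_Ici_self)).intervalIntegrable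
  have hrnn : ∀ u : ℝ, 0 ≤ u → 0 ≤ r u := by
    intro u hu
    exact intervalIntegral.integral_nonneg hu (fun s _ => norm_nonneg _)
  have hrpos : ∀ u : ℝ, 0 ≤ u → 0 < r u + c := fun u hu => by
    have := hrnn u hu; linarith
  -- key derivative computation at interior points
  have key : ∀ u ∈ Set.Ioo 0 t,
      HasDerivAt (fun v => (L (θ v) - ε) * (r v + c))
        ((-(‖G u‖^2)) * (r u + c) + (L (θ u) - ε) * ‖G u‖) u := by
    intro u hu
    have hu0 : (0:ℝ) ≤ u := hu.1.le
    -- derivative of r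
    have hrd : HasDerivAt r ‖deriv θ u‖ u := by
      refine intervalIntegral.integral_hasDerivAt_right (hint u hu0) ?_ ?_
      · exact ⟨Set.Ici 0, Ici_mem_nhds hu.1, (hφc.mono Set.Subset.rfl).aestronglyMeasurable
          measurableSet_Ici⟩
      · exact (hφc u hu0).continuousAt (Ici_mem_nhds hu.1)
    have hrd' : HasDerivAt (fun v => r v + c) ‖G u‖ u := by
      rw [hnormeq u hu0]
      exact hrd.add_const c
    -- derivative of L ∘ θ
    have hgr : HasGradientAt L (G u) (θ u) := (hLd (θ u)).hasGradientAt
    have hLθ : HasDerivAt (fun v => L (θ v)) (-(‖G u‖^2)) u := by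
      have h2 := hgr.hasFDerivAt.comp_hasDerivAt u (hflow u hu0)
      have h3 : (InnerProductSpace.toDual ℝ Θ) (G u) (-(G u)) = -(‖G u‖^2) := by
        rw [InnerProductSpace.toDual_apply_apply, inner_neg_right, real_inner_self_eq_norm_sq]
      rwa [h3] at h2
    exact (hLθ.sub_const ε).mul hrd'
  -- antitone
  have hcont : ContinuousOn (fun v => (L (θ v) - ε) * (r v + c)) (Set.Icc 0 t) := by
    have h1 : ContinuousOn (fun v => L (θ v) - ε) (Set.Icc 0 t) :=
      ((hLd.continuous.comp_continuousOn hθc).sub continuousOn_const).mono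
        Set.Icc_subset_Ici_self
    have h2 : ContinuousOn r (Set.Icc 0 t) := by
      have hIcc : IntegrableOn (fun s => ‖deriv θ s‖) (Set.Icc 0 t) volume :=
        (hφc.mono Set.Icc_subset_Ici_self).integrableOn_Icc
      have := intervalIntegral.continuousOn_primitive_interval
        (μ := volume) (a := (0:ℝ)) (b := t) (by rwa [Set.uIcc_of_le ht])
      rwa [Set.uIcc_of_le ht] at this
    exact h1.mul (h2.add continuousOn_const)
  have hanti : AntitoneOn (fun v => (L (θ v) - ε) * (r v + c)) (Set.Icc 0 t) := by
    apply antitoneOn_of_deriv_nonpos (convex_Icc 0 t) hcont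
    · intro u hu
      rw [interior_Icc] at hu
      exact (key u hu).differentiableAt.differentiableWithinAt
    · intro u hu
      rw [interior_Icc] at hu
      rw [(key u hu).deriv]
      have hu0 : (0:ℝ) ≤ u := hu.1.le
      have huT : u < T := hu.2.trans htT
      have hKLu := hKL u hu0 huT
      have hrcpos := hrpos u hu0
      have hLu : 0 ≤ L (θ u) - ε := sub_nonneg.mpr (hge u hu0 huT)
      have h1 : L (θ u) - ε ≤ ‖G u‖ * (r u + c) := by
        rw [div_le_iff₀ hrcpos] at hKLu
        exact hKLu
      have h2 : (L (θ u) - ε) * ‖G u‖ ≤ ‖G u‖ * (r u + c) * ‖G u‖ :=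
        mul_le_mul_of_nonneg_right h1 (norm_nonneg _)
      nlinarith [norm_nonneg (G u), sq_nonneg (‖G u‖)]
  have h0mem : (0:ℝ) ∈ Set.Icc (0:ℝ) t := ⟨le_rfl, ht⟩
  have htmem : t ∈ Set.Icc (0:ℝ) t := ⟨ht, le_rfl⟩
  have := hanti h0mem htmem ht
  have hr0 : r 0 = 0 := intervalIntegral.integral_same
  simp only [hr0, zero_add] at this
  calc (L (θ t) - ε) * (r t + c) ≤ (L (θ 0) - ε) * c := this
    _ = c * (L (θ 0) - ε) := mul_comm _ _
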